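/- Let μ be a positive finite measure on ℝ. The linear span of the functions t ↦ 1/(t − conj w), as w ranges over ℂ \ ℝ, is dense in L²(μ). -/

import Mathlib

open MeasureTheory Complex

open OnePoint Filter Topology Bornology

namespace CKD

lemma sub_conj_ne (w : ℂ) (hw : w.im ≠ 0) (t : ℝ) : (t:ℂ) - (starRingEnd ℂ) w ≠ 0 := by
  intro h
  apply hw
  have := congrArg Complex.im h
  simpa using this

lemma norm_sub_conj_ge (w : ℂ) (t : ℝ) : |w.im| ≤ ‖(t:ℂ) - (starRingEnd ℂ) w‖ := by
  have h : ((t:ℂ) - (starRingEnd ℂ) w).im = w.im := by simp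
  calc |w.im| = |((t:ℂ) - (starRingEnd ℂ) w).im| := by rw [h]
    _ ≤ ‖(t:ℂ) - (starRingEnd ℂ) w‖ := Complex.abs_im_le_norm _
    _ = ‖(t:ℂ) - (starRingEnd ℂ) w‖ := rfl

lemma norm_ker_le (w : ℂ) (hw : w.im ≠ 0) (t : ℝ) :
    ‖((t:ℂ) - (starRingEnd ℂ) w)⁻¹‖ ≤ |w.im|⁻¹ := by
  rw [norm_inv]
  exact inv_anti₀ (abs_pos.2 hw) (norm_sub_conj_ge w t)

lemma continuous_kerFun (w : ℂ) (hw : w.im ≠ 0) :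
    Continuous (fun t : ℝ => ((t:ℂ) - (starRingEnd ℂ) w)⁻¹) :=
  ((Complex.continuous_ofReal.sub continuous_const).inv₀ (sub_conj_ne w hw))

lemma tendsto_kerFun (w : ℂ) :
    Tendsto (fun t : ℝ => ((t:ℂ) - (starRingEnd ℂ) w)⁻¹) (coclosedCompact ℝ) (𝓝 0) := by
  rw [coclosedCompact_eq_cocompact]
  apply tendsto_inv₀_cobounded.comp
  rw [← tendsto_norm_atTop_iff_cobounded]
  have h1 : Tendsto (fun t : ℝ => ‖t‖ - ‖(starRingEnd ℂ) w‖) (cocompact ℝ) atTop := by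
    apply tendsto_atTop_add_const_right
    exact tendsto_norm_cocompact_atTop
  apply tendsto_atTop_mono _ h1
  intro t
  calc ‖t‖ - ‖(starRingEnd ℂ) w‖ = ‖(t:ℂ)‖ - ‖(starRingEnd ℂ) w‖ := by
        rw [Complex.norm_real]
    _ ≤ ‖(t:ℂ) - (starRingEnd ℂ) w‖ := norm_sub_norm_le _ _

/-- The Cauchy kernel as a continuous map on the one-point compactification, vanishing at ∞. -/
noncomputable def cker (w : ℂ) (hw : w.im ≠ 0) : C(OnePoint ℝ, ℂ) :=
  OnePoint.continuousMapMk ⟨fun t : ℝ => ((t:ℂ) - (starRingEnd ℂ) w)⁻¹, continuous_kerFun w hw⟩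
    0 (tendsto_kerFun w)

@[simp] lemma cker_coe (w : ℂ) (hw : w.im ≠ 0) (t : ℝ) :
    cker w hw (t : OnePoint ℝ) = ((t:ℂ) - (starRingEnd ℂ) w)⁻¹ := rfl

@[simp] lemma cker_infty (w : ℂ) (hw : w.im ≠ 0) : cker w hw ∞ = 0 := rfl

/-- The generating set. -/
def kset : Set C(OnePoint ℝ, ℂ) := {f | ∃ w : ℂ, ∃ hw : w.im ≠ 0, f = cker w hw}

lemma norm_cker_le (w : ℂ) (hw : w.im ≠ 0) : ‖cker w hw‖ ≤ |w.im|⁻¹ := by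
  rw [ContinuousMap.norm_le _ (by positivity)]
  intro x
  induction x using OnePoint.rec with
  | infty => simpa using by positivity
  | coe t => simpa using norm_ker_le w hw t

end CKD

namespace CKD
open Submodule

noncomputable abbrev V : Submodule ℂ C(OnePoint ℝ, ℂ) :=
  (Submodule.span ℂ kset).topologicalClosure

lemma cker_mem_V (w : ℂ) (hw : w.im ≠ 0) : cker w hw ∈ V :=
  le_topologicalClosure _ (subset_span ⟨w, hw, rfl⟩)

/-- partial fractions -/
lemma cker_mul_of_ne (w w' : ℂ) (hw : w.im ≠ 0) (hw' : w'.im ≠ 0) (hne : w ≠ w') :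
    cker w hw * cker w' hw' =
      ((starRingEnd ℂ) w - (starRingEnd ℂ) w')⁻¹ • (cker w hw - cker w' hw') := by
  have hcne : (starRingEnd ℂ) w - (starRingEnd ℂ) w' ≠ 0 := by
    intro h
    exact hne (by simpa using (starRingEnd ℂ).injective (sub_eq_zero.mp h))
  ext x
  induction x using OnePoint.rec with
  | infty => simp
  | coe t =>
    have h1 := sub_conj_ne w hw t
    have h2 := sub_conj_ne w' hw' t
    simp only [ContinuousMap.mul_apply, ContinuousMap.smul_apply, ContinuousMap.sub_apply,
      cker_coe, smul_eq_mul]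
    field_simp
    ring

lemma star_cker (w : ℂ) (hw : w.im ≠ 0) :
    star (cker w hw) = cker ((starRingEnd ℂ) w) (by simpa using hw) := by
  ext x
  induction x using OnePoint.rec with
  | infty => simp [ContinuousMap.star_apply]
  | coe t =>
    simp only [ContinuousMap.star_apply, cker_coe]
    simp [star_inv₀, star_sub, Complex.star_def, Complex.conj_ofReal]

lemma norm_cker_sub_le (w w' : ℂ) (hw : w.im ≠ 0) (hw' : w'.im ≠ 0) :
    ‖cker w hw - cker w' hw'‖ ≤ ‖w - w'‖ * (|w.im|⁻¹ * |w'.im|⁻¹) := by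
  rw [ContinuousMap.norm_le _ (by positivity)]
  intro x
  induction x using OnePoint.rec with
  | infty => simpa using by positivity
  | coe t =>
    have h1 := sub_conj_ne w hw t
    have h2 := sub_conj_ne w' hw' t
    simp only [ContinuousMap.sub_apply, cker_coe]
    have key : ((t:ℂ) - (starRingEnd ℂ) w)⁻¹ - ((t:ℂ) - (starRingEnd ℂ) w')⁻¹
        = ((starRingEnd ℂ) w - (starRingEnd ℂ) w')
          * (((t:ℂ) - (starRingEnd ℂ) w)⁻¹ * ((t:ℂ) - (starRingEnd ℂ) w')⁻¹) := by
      field_simp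
      ring
    rw [key]
    rw [norm_mul, norm_mul]
    have e1 : ‖(starRingEnd ℂ) w - (starRingEnd ℂ) w'‖ = ‖w - w'‖ := by
      rw [← map_sub]
      exact RCLike.norm_conj _
    rw [e1]
    gcongr
    all_goals first
      | exact norm_ker_le w hw t
      | exact norm_ker_le w' hw' t

end CKD

namespace CKD
open Submodule

lemma V_coe : (V : Set C(OnePoint ℝ, ℂ)) = closure (Submodule.span ℂ kset : Set C(OnePoint ℝ, ℂ)) :=
  rfl

lemma cker_mul_mem_span_of_ne (w w' : ℂ) (hw : w.im ≠ 0) (hw' : w'.im ≠ 0) (hne : w ≠ w') :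
    cker w hw * cker w' hw' ∈ Submodule.span ℂ kset := by
  rw [cker_mul_of_ne w w' hw hw' hne]
  exact smul_mem _ _ (sub_mem (subset_span ⟨w, hw, rfl⟩) (subset_span ⟨w', hw', rfl⟩))

lemma cker_mul_mem_V (w w' : ℂ) (hw : w.im ≠ 0) (hw' : w'.im ≠ 0) :
    cker w hw * cker w' hw' ∈ V := by
  by_cases hne : w = w'
  case neg => exact le_topologicalClosure _ (cker_mul_mem_span_of_ne w w' hw hw' hne)
  subst hne
  -- approximate the double pole by two simple poles
  set wn : ℕ → ℂ := fun n => w + (w.im / (n+1) : ℝ) * Complex.I with hwn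
  have him : ∀ n : ℕ, (wn n).im = w.im + w.im / (n+1) := by
    intro n
    simp only [hwn, Complex.add_im, Complex.mul_im, Complex.I_re, Complex.I_im,
      Complex.ofReal_re, Complex.ofReal_im]
    ring
  have habs : ∀ n : ℕ, |w.im| ≤ |(wn n).im| := by
    intro n
    rw [him n]
    have hn1 : (0:ℝ) < (n:ℝ) + 1 := by positivity
    rcases lt_or_gt_of_ne hw with h | h
    · have hd : w.im / ((n:ℝ)+1) < 0 := div_neg_of_neg_of_pos h hn1
      rw [abs_of_neg h, abs_of_neg (by linarith)]
      linarith
    · have hd : 0 < w.im / ((n:ℝ)+1) := div_pos h hn1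
      rw [abs_of_pos h, abs_of_pos (by linarith)]
      linarith
  have himne : ∀ n : ℕ, (wn n).im ≠ 0 := by
    intro n h
    have := habs n
    rw [h] at this
    simp only [abs_zero] at this
    exact hw (abs_eq_zero.mp (le_antisymm this (abs_nonneg _)))
  have hwne : ∀ n : ℕ, w ≠ wn n := by
    intro n h
    have : (w.im / (n+1) : ℝ) ≠ 0 := by positivity
    apply this
    have := congrArg Complex.im h
    rw [him n] at this
    linarith
  have hnorm : ∀ n : ℕ, ‖w - wn n‖ = |w.im| / (n+1) := by
    intro n
    have : w - wn n = -((w.im / (n+1) : ℝ) * Complex.I) := by rw [hwn]; ring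
    rw [this, norm_neg]
    rw [norm_mul, Complex.norm_real, Complex.norm_I, mul_one]
    rw [Real.norm_eq_abs, abs_div]
    congr 1
    rw [abs_of_pos (by positivity)]
  -- the approximants lie in the span
  have hmem : ∀ n : ℕ, cker w hw * cker (wn n) (himne n) ∈ Submodule.span ℂ kset :=
    fun n => cker_mul_mem_span_of_ne _ _ _ _ (hwne n)
  -- convergence
  have hb : ∀ n : ℕ, ‖cker w hw * cker (wn n) (himne n) - cker w hw * cker w hw‖
      ≤ (|w.im|⁻¹ * |w.im|⁻¹ * |w.im|⁻¹ * |w.im|) / (n+1) := by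
    intro n
    have : cker w hw * cker (wn n) (himne n) - cker w hw * cker w hw
        = cker w hw * (cker (wn n) (himne n) - cker w hw) := by ring
    rw [this]
    calc ‖cker w hw * (cker (wn n) (himne n) - cker w hw)‖
        ≤ ‖cker w hw‖ * ‖cker (wn n) (himne n) - cker w hw‖ := norm_mul_le _ _
      _ ≤ |w.im|⁻¹ * (‖wn n - w‖ * (|(wn n).im|⁻¹ * |w.im|⁻¹)) := by
          gcongr
          · exact norm_cker_le w hw
          · exact norm_cker_sub_le _ _ _ _
      _ ≤ |w.im|⁻¹ * ((|w.im| / (n+1)) * (|w.im|⁻¹ * |w.im|⁻¹)) := by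
          have hinv : |(wn n).im|⁻¹ ≤ |w.im|⁻¹ := inv_anti₀ (abs_pos.mpr hw) (habs n)
          rw [← norm_neg, neg_sub, hnorm n]
          exact mul_le_mul_of_nonneg_left (mul_le_mul_of_nonneg_left
            (mul_le_mul_of_nonneg_right hinv (by positivity)) (by positivity)) (by positivity)
      _ = (|w.im|⁻¹ * |w.im|⁻¹ * |w.im|⁻¹ * |w.im|) / (n+1) := by ring
  have htend : Filter.Tendsto (fun n : ℕ => cker w hw * cker (wn n) (himne n))
      Filter.atTop (nhds (cker w hw * cker w hw)) := by
    rw [tendsto_iff_norm_sub_tendsto_zero]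
    apply squeeze_zero (fun n => norm_nonneg _) hb
    have h0 : Filter.Tendsto
        (fun n : ℕ => (|w.im|⁻¹ * |w.im|⁻¹ * |w.im|⁻¹ * |w.im|) / (n : ℝ))
        Filter.atTop (nhds 0) := tendsto_const_div_atTop_nhds_zero_nat _
    have := h0.comp (Filter.tendsto_add_atTop_nat 1)
    refine this.congr fun n => ?_
    simp only [Function.comp_apply]
    push_cast
    ring
  exact mem_closure_of_tendsto htend (Filter.Eventually.of_forall hmem)

end CKD

namespace CKD
open Submodule

lemma span_mul_mem_V {a b : C(OnePoint ℝ, ℂ)} (ha : a ∈ Submodule.span ℂ kset)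
    (hb : b ∈ Submodule.span ℂ kset) : a * b ∈ V := by
  induction ha using Submodule.span_induction with
  | mem x hx =>
    induction hb using Submodule.span_induction with
    | mem y hy =>
      obtain ⟨w, hw, rfl⟩ := hx
      obtain ⟨w', hw', rfl⟩ := hy
      exact cker_mul_mem_V w w' hw hw'
    | zero => simpa using zero_mem V
    | add y z _ _ hy hz => rw [mul_add]; exact add_mem hy hz
    | smul c y _ hy => rw [mul_smul_comm]; exact smul_mem _ _ hy
  | zero => simpa using zero_mem V
  | add x y _ _ hx hy => rw [add_mul]; exact add_mem hx hy
  | smul c x _ hx => rw [smul_mul_assoc]; exact smul_mem _ _ hx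

lemma mul_mem_V {a b : C(OnePoint ℝ, ℂ)} (ha : a ∈ V) (hb : b ∈ V) : a * b ∈ V := by
  have step1 : ∀ b' ∈ Submodule.span ℂ kset, a * b' ∈ V := by
    intro b' hb'
    have hclosed : IsClosed {x : C(OnePoint ℝ, ℂ) | x * b' ∈ V} :=
      IsClosed.preimage (continuous_mul_right b') (Submodule.isClosed_topologicalClosure _)
    have hsub : (Submodule.span ℂ kset : Set C(OnePoint ℝ, ℂ)) ⊆ {x | x * b' ∈ V} :=
      fun x hx => span_mul_mem_V hx hb'
    exact closure_minimal hsub hclosed ha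
  have hclosed : IsClosed {y : C(OnePoint ℝ, ℂ) | a * y ∈ V} :=
    IsClosed.preimage (continuous_mul_left a) (Submodule.isClosed_topologicalClosure _)
  exact closure_minimal step1 hclosed hb

lemma star_mem_V {a : C(OnePoint ℝ, ℂ)} (ha : a ∈ V) : star a ∈ V := by
  have hspan : ∀ x ∈ Submodule.span ℂ kset, star x ∈ V := by
    intro x hx
    induction hx using Submodule.span_induction with
    | mem y hy =>
      obtain ⟨w, hw, rfl⟩ := hy
      rw [star_cker]
      exact cker_mem_V _ _
    | zero => simpa using zero_mem V
    | add y z _ _ hy hz => rw [star_add]; exact add_mem hy hz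
    | smul c y _ hy => rw [star_smul]; exact smul_mem _ _ hy
  have hclosed : IsClosed {x : C(OnePoint ℝ, ℂ) | star x ∈ V} :=
    IsClosed.preimage continuous_star (Submodule.isClosed_topologicalClosure _)
  exact closure_minimal hspan hclosed ha

lemma eval_infty_V {a : C(OnePoint ℝ, ℂ)} (ha : a ∈ V) : a ∞ = 0 := by
  have hclosed : IsClosed {f : C(OnePoint ℝ, ℂ) | f ∞ = 0} :=
    isClosed_singleton.preimage (continuous_eval_const ∞)
  have hspan : (Submodule.span ℂ kset : Set C(OnePoint ℝ, ℂ)) ⊆ {f | f ∞ = 0} := by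
    intro x hx
    induction hx using Submodule.span_induction with
    | mem y hy => obtain ⟨w, hw, rfl⟩ := hy; exact cker_infty w hw
    | zero => rfl
    | add y z _ _ hy hz => simp only [Set.mem_setOf_eq] at *; simp [ContinuousMap.add_apply, hy, hz]
    | smul c y _ hy => simp only [Set.mem_setOf_eq] at *; simp [ContinuousMap.smul_apply, hy]
  exact closure_minimal hspan hclosed ha

end CKD

namespace CKD
open Submodule

lemma separates : (StarAlgebra.adjoin ℂ kset).SeparatesPoints := by
  intro x y hxy
  have hI : (Complex.I).im ≠ 0 := by simp
  refine ⟨_, ⟨cker Complex.I hI, StarAlgebra.subset_adjoin ℂ _ ⟨Complex.I, hI, rfl⟩, rfl⟩, ?_⟩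
  have hval : ∀ t : ℝ, cker Complex.I hI (t : OnePoint ℝ) ≠ 0 := by
    intro t
    simp only [cker_coe]
    exact inv_ne_zero (sub_conj_ne Complex.I hI t)
  induction x using OnePoint.rec with
  | infty =>
    induction y using OnePoint.rec with
    | infty => exact absurd rfl hxy
    | coe t => simpa using (hval t).symm
  | coe s =>
    induction y using OnePoint.rec with
    | infty => simpa using hval s
    | coe t =>
      simp only [cker_coe]
      intro h
      apply hxy
      have h2 : (s:ℂ) - (starRingEnd ℂ) Complex.I = (t:ℂ) - (starRingEnd ℂ) Complex.I :=
        inv_injective h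
      have hst : s = t := Complex.ofReal_inj.mp (by linear_combination h2)
      rw [hst]

end CKD

namespace CKD
open Submodule

lemma adjoin_subset : (StarAlgebra.adjoin ℂ kset : Set C(OnePoint ℝ, ℂ)) ⊆
    {f | ∃ v ∈ V, ∃ c : ℂ, f = v + c • 1} := by
  intro a ha
  induction ha using StarAlgebra.adjoin_induction with
  | mem x hx =>
    obtain ⟨w, hw, rfl⟩ := hx
    exact ⟨cker w hw, cker_mem_V w hw, 0, by simp⟩
  | algebraMap r => exact ⟨0, zero_mem V, r, by simp [Algebra.algebraMap_eq_smul_one]⟩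
  | add x y hx hy ihx ihy =>
    obtain ⟨v, hv, c, rfl⟩ := ihx
    obtain ⟨v', hv', c', rfl⟩ := ihy
    exact ⟨v + v', add_mem hv hv', c + c', by rw [add_smul]; ring⟩
  | mul x y hx hy ihx ihy =>
    obtain ⟨v, hv, c, rfl⟩ := ihx
    obtain ⟨v', hv', c', rfl⟩ := ihy
    refine ⟨v * v' + c' • v + c • v',
      add_mem (add_mem (mul_mem_V hv hv') (smul_mem _ _ hv)) (smul_mem _ _ hv'),
      c * c', ?_⟩
    simp only [add_mul, mul_add, smul_mul_assoc, mul_smul_comm, one_mul, mul_one, smul_smul,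
      smul_add]
    rw [mul_comm c' c]
    abel
  | star x hx ihx =>
    obtain ⟨v, hv, c, rfl⟩ := ihx
    exact ⟨star v, star_mem_V hv, starRingEnd ℂ c, by
      rw [star_add, star_smul, star_one]; rfl⟩

/-- Main Stone–Weierstrass consequence: any continuous function on the one-point
compactification vanishing at infinity lies in the closed span of the Cauchy kernels. -/
lemma mem_V_of_eval_infty (G : C(OnePoint ℝ, ℂ)) (hG : G ∞ = 0) : G ∈ V := by
  have htop := ContinuousMap.starSubalgebra_topologicalClosure_eq_top_of_separatesPoints
    (StarAlgebra.adjoin ℂ kset) separates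
  have hmem : G ∈ closure (StarAlgebra.adjoin ℂ kset : Set C(OnePoint ℝ, ℂ)) := by
    have : G ∈ (StarAlgebra.adjoin ℂ kset).topologicalClosure := htop ▸ trivial
    exact this
  have hV : G ∈ closure (V : Set C(OnePoint ℝ, ℂ)) := by
    rw [Metric.mem_closure_iff]
    intro ε hε
    rw [Metric.mem_closure_iff] at hmem
    obtain ⟨a, ha, hdist⟩ := hmem (ε/2) (by linarith)
    obtain ⟨v, hv, c, rfl⟩ := adjoin_subset ha
    refine ⟨v, hv, ?_⟩
    have hc : ‖c‖ < ε/2 := by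
      have h1 : (v + c • 1 - G) ∞ = c := by
        simp [ContinuousMap.sub_apply, ContinuousMap.add_apply, ContinuousMap.smul_apply,
          eval_infty_V hv, hG]
      calc ‖c‖ = ‖(v + c • 1 - G) ∞‖ := by rw [h1]
        _ ≤ ‖v + c • 1 - G‖ := ContinuousMap.norm_coe_le_norm _ _
        _ = dist G (v + c • 1) := by rw [dist_eq_norm, ← norm_neg]; ring_nf
        _ < ε/2 := hdist
    have hcs : ‖c • (1 : C(OnePoint ℝ, ℂ))‖ = ‖c‖ := by
      rw [norm_smul, norm_one, mul_one]
    calc dist G v ≤ dist G (v + c • 1) + dist (v + c • 1) v := dist_triangle _ _ _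
      _ = dist G (v + c • 1) + ‖c‖ := by
          congr 1
          rw [dist_eq_norm, add_sub_cancel_left, hcs]
      _ < ε/2 + ε/2 := add_lt_add hdist hc
      _ = ε := by ring
  rwa [closure_eq_iff_isClosed.mpr (Submodule.isClosed_topologicalClosure _)] at hV

end CKD

namespace CKD
open Submodule

variable (μ : Measure ℝ) [IsFiniteMeasure μ]

lemma span_to_Lp (P : C(OnePoint ℝ, ℂ)) (hP : P ∈ Submodule.span ℂ kset) :
    ∃ F : Lp ℂ 2 μ, F ∈ Submodule.span ℂ
      {F : Lp ℂ 2 μ | ∃ w : ℂ, w.im ≠ 0 ∧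
        (F : ℝ → ℂ) =ᵐ[μ] fun t : ℝ => ((t : ℂ) - (starRingEnd ℂ) w)⁻¹} ∧
      (F : ℝ → ℂ) =ᵐ[μ] fun t : ℝ => P (t : OnePoint ℝ) := by
  induction hP using Submodule.span_induction with
  | mem x hx =>
    obtain ⟨w, hw, rfl⟩ := hx
    have hml : MemLp (fun t : ℝ => ((t : ℂ) - (starRingEnd ℂ) w)⁻¹) 2 μ := by
      refine MemLp.of_bound ((continuous_kerFun w hw).aestronglyMeasurable) |w.im|⁻¹ ?_
      exact Filter.Eventually.of_forall (norm_ker_le w hw)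
    refine ⟨hml.toLp _, subset_span ⟨w, hw, hml.coeFn_toLp⟩, ?_⟩
    exact hml.coeFn_toLp
  | zero =>
    refine ⟨0, zero_mem _, ?_⟩
    filter_upwards [Lp.coeFn_zero ℂ 2 μ] with t ht
    rw [ht]
    simp
  | add x y hx hy ihx ihy =>
    obtain ⟨F, hF, hFe⟩ := ihx
    obtain ⟨F', hF', hFe'⟩ := ihy
    refine ⟨F + F', add_mem hF hF', ?_⟩
    filter_upwards [Lp.coeFn_add F F', hFe, hFe'] with t h1 h2 h3
    rw [h1, Pi.add_apply, h2, h3, ContinuousMap.add_apply]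
  | smul c x hx ihx =>
    obtain ⟨F, hF, hFe⟩ := ihx
    refine ⟨c • F, smul_mem _ _ hF, ?_⟩
    filter_upwards [Lp.coeFn_smul c F, hFe] with t h1 h2
    rw [h1, Pi.smul_apply, h2, ContinuousMap.smul_apply]

end CKD

open CKD

/-- The linear span of the Cauchy kernels `t ↦ 1/(t - conj w)`, `w ∈ ℂ \ ℝ`,
is dense in `L²(μ)` for a positive finite measure `μ` on `ℝ`. -/
theorem cauchy_kernels_dense (μ : Measure ℝ) [IsFiniteMeasure μ] :
    Dense (↑(Submodule.span ℂ
      {F : Lp ℂ 2 μ | ∃ w : ℂ, w.im ≠ 0 ∧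
        (F : ℝ → ℂ) =ᵐ[μ] fun t : ℝ => ((t : ℂ) - (starRingEnd ℂ) w)⁻¹}) :
      Set (Lp ℂ 2 μ)) := by
  rw [Metric.dense_iff]
  intro f ε hε
  have hf : MemLp (⇑f) 2 μ := Lp.memLp f
  have hδ0 : (ENNReal.ofReal (ε/4)) ≠ 0 := by
    rw [Ne, ENNReal.ofReal_eq_zero, not_le]
    linarith
  obtain ⟨g, hgsupp, hgapprox, hgcont, hgmem⟩ :=
    hf.exists_hasCompactSupport_eLpNorm_sub_le (by norm_num : (2:ENNReal) ≠ ⊤) hδ0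
  have htend : Filter.Tendsto g (Filter.coclosedCompact ℝ) (nhds 0) := by
    rw [coclosedCompact_eq_cocompact]
    exact hgsupp.is_zero_at_infty
  set G : C(OnePoint ℝ, ℂ) := OnePoint.continuousMapMk ⟨g, hgcont⟩ 0 htend with hGdef
  have hGmem : G ∈ closure (Submodule.span ℂ kset : Set C(OnePoint ℝ, ℂ)) :=
    mem_V_of_eval_infty G rfl
  set M : ENNReal := μ Set.univ ^ (2:ENNReal).toReal⁻¹ with hM
  have hMne : M ≠ ⊤ := ENNReal.rpow_ne_top_of_nonneg (by norm_num) (measure_ne_top μ _)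
  set δ := (ε/4) / (M.toReal + 1) with hδdef
  have hMnn : (0:ℝ) ≤ M.toReal := ENNReal.toReal_nonneg
  have hδpos : 0 < δ := by
    rw [hδdef]
    positivity
  obtain ⟨P, hPspan, hPdist⟩ := Metric.mem_closure_iff.mp hGmem δ hδpos
  obtain ⟨F, hFS, hFeq⟩ := span_to_Lp μ P hPspan
  refine ⟨F, Metric.mem_ball.mpr ?_, hFS⟩
  -- pointwise bound
  have hpt : ∀ᵐ t ∂μ, ‖(g - (F : ℝ → ℂ)) t‖ ≤ δ := by
    filter_upwards [hFeq] with t ht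
    have hgt : g t = G (t : OnePoint ℝ) := rfl
    rw [Pi.sub_apply, ht, hgt]
    calc ‖G (t : OnePoint ℝ) - P (t : OnePoint ℝ)‖
        = ‖(G - P) (t : OnePoint ℝ)‖ := by rw [ContinuousMap.sub_apply]
      _ ≤ ‖G - P‖ := ContinuousMap.norm_coe_le_norm _ _
      _ = dist G P := (dist_eq_norm _ _).symm
      _ ≤ δ := le_of_lt hPdist
  have h2 : eLpNorm (g - (F : ℝ → ℂ)) 2 μ ≤ M * ENNReal.ofReal δ :=
    eLpNorm_le_of_ae_bound hpt
  have hMδ : M * ENNReal.ofReal δ ≤ ENNReal.ofReal (ε/4) := by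
    conv_lhs => rw [← ENNReal.ofReal_toReal hMne]
    rw [← ENNReal.ofReal_mul hMnn]
    apply ENNReal.ofReal_le_ofReal
    have h1 : M.toReal * δ = (ε/4) * (M.toReal / (M.toReal + 1)) := by
      rw [hδdef]; ring
    rw [h1]
    have h2 : M.toReal / (M.toReal + 1) ≤ 1 := div_le_one_of_le₀ (by linarith) (by positivity)
    nlinarith
  have htri : eLpNorm (⇑f - ⇑F) 2 μ ≤ eLpNorm (⇑f - g) 2 μ + eLpNorm (g - ⇑F) 2 μ := by
    have hdecomp : (⇑f - ⇑F) = (⇑f - g) + (g - ⇑F) := by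
      ext t
      simp only [Pi.sub_apply, Pi.add_apply]
      ring
    rw [hdecomp]
    exact eLpNorm_add_le (hf.aestronglyMeasurable.sub hgmem.aestronglyMeasurable)
      (hgmem.aestronglyMeasurable.sub (Lp.aestronglyMeasurable F)) (by norm_num)
  have hsum : eLpNorm (⇑f - ⇑F) 2 μ < ENNReal.ofReal ε := by
    calc eLpNorm (⇑f - ⇑F) 2 μ ≤ eLpNorm (⇑f - g) 2 μ + eLpNorm (g - ⇑F) 2 μ := htri
      _ ≤ ENNReal.ofReal (ε/4) + ENNReal.ofReal (ε/4) :=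
          add_le_add hgapprox (h2.trans hMδ)
      _ = ENNReal.ofReal (ε/2) := by
          rw [← ENNReal.ofReal_add (by linarith) (by linarith)]
          congr 1
          ring
      _ < ENNReal.ofReal ε := by
          rw [ENNReal.ofReal_lt_ofReal_iff (by linarith)]
          linarith
  have hdist : dist F f < ε := by
    rw [Lp.dist_def, eLpNorm_sub_comm]
    exact ENNReal.toReal_lt_of_lt_ofReal hsum
  exact Metric.mem_ball.mpr hdist
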